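/- The map Π_ρ : Ω → ℝ/ℤ is surjective. -/

import Mathlib

set_option maxHeartbeats 1000000

theorem repr_exists' (S : ℕ → ℕ) (hS0 : S 0 = 1) (hmono : Monotone S)
    (hdouble : ∀ j, S (j + 1) ≤ 2 * S j) (hub : ∀ n, ∃ j, n < S j) :
    ∀ n : ℕ, ∃ F : Finset ℕ, (∑ i ∈ F, S i = n) ∧
      ∀ j, ∑ i ∈ F ∩ Finset.range (j + 1), S i < S (j + 1) := by
  have hpos : ∀ j, 1 ≤ S j := fun j => hS0 ▸ hmono (Nat.zero_le j)
  intro n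
  induction n using Nat.strong_induction_on with
  | _ n IH =>
    rcases Nat.eq_zero_or_pos n with rfl | hn
    · exact ⟨∅, by simp, fun j => by simp; exact hpos (j + 1)⟩
    · have hex := hub n
      have hBspec : n < S (Nat.find hex) := Nat.find_spec hex
      set B := Nat.find hex with hBdef
      have hB1 : 1 ≤ B := by
        rcases Nat.eq_zero_or_pos B with h0 | h; · rw [h0, hS0] at hBspec; omega
        · exact h
      set m := B - 1 with hmdef
      have hmB : m + 1 = B := Nat.succ_pred_eq_of_pos hB1
      have hSm : S m ≤ n := by
        by_contra h
        exact Nat.find_min hex (show m < B by omega) (by omega)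
      have hn' : n - S m < S m := by
        have h2 := hdouble m
        rw [hmB] at h2
        omega
      have hlt : n - S m < n := Nat.sub_lt hn (hpos m)
      obtain ⟨F', hFsum, hFcon⟩ := IH (n - S m) hlt
      have hFsub : ∀ i ∈ F', i < m := by
        intro i hi
        by_contra h
        push_neg at h
        have h1 : S m ≤ S i := hmono h
        have h2 : S i ≤ ∑ i ∈ F', S i := Finset.single_le_sum (fun _ _ => Nat.zero_le _) hi
        omega
      have hmnot : m ∉ F' := fun hm => absurd (hFsub m hm) (lt_irrefl m)
      refine ⟨insert m F', ?_, ?_⟩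
      · rw [Finset.sum_insert hmnot, hFsum]; omega
      · intro j
        rcases lt_or_ge j m with hj | hj
        · have heq : insert m F' ∩ Finset.range (j + 1) = F' ∩ Finset.range (j + 1) := by
            ext i
            simp only [Finset.mem_inter, Finset.mem_insert, Finset.mem_range]
            constructor
            · rintro ⟨h1 | h1, h2⟩ <;> [omega; exact ⟨h1, h2⟩]
            · exact fun ⟨h1, h2⟩ => ⟨Or.inr h1, h2⟩
          rw [heq]; exact hFcon j
        · have h1 : ∑ i ∈ insert m F' ∩ Finset.range (j + 1), S i ≤ ∑ i ∈ insert m F', S i :=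
            Finset.sum_le_sum_of_subset Finset.inter_subset_left
          have h2 : ∑ i ∈ insert m F', S i = n := by rw [Finset.sum_insert hmnot, hFsum]; omega
          have h3 : S (m + 1) ≤ S (j + 1) := hmono (by omega)
          rw [hmB] at h3
          omega

theorem dense_zmul' (ρ : ℝ) (hirr : Irrational ρ) :
    Dense (Set.range fun z : ℤ => z • ((ρ : AddCircle (1 : ℝ)))) := by
  set G := AddSubgroup.closure ({1, ρ} : Set ℝ) with hG
  have h1G : (1 : ℝ) ∈ G := AddSubgroup.subset_closure (by simp)
  have hρG : ρ ∈ G := AddSubgroup.subset_closure (by simp)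
  have hdense : Dense (G : Set ℝ) := by
    rcases AddSubgroup.dense_or_cyclic G with h | ⟨g, hg⟩
    · exact h
    · exfalso
      rw [hg] at h1G hρG
      obtain ⟨m, hm⟩ := AddSubgroup.mem_closure_singleton.mp h1G
      obtain ⟨k, hk⟩ := AddSubgroup.mem_closure_singleton.mp hρG
      rw [zsmul_eq_mul] at hm hk
      have hm0 : (m : ℝ) ≠ 0 := by
        intro h0; rw [h0, zero_mul] at hm; exact one_ne_zero hm.symm
      refine hirr ⟨(k : ℚ) / (m : ℚ), ?_⟩
      push_cast
      rw [← hk]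
      field_simp
      linear_combination (-(k : ℝ)) * hm
  -- push forward to the circle
  have hcont : Continuous ((↑) : ℝ → AddCircle (1 : ℝ)) := continuous_quotient_mk'
  have hsurj : Function.Surjective ((↑) : ℝ → AddCircle (1 : ℝ)) :=
    QuotientAddGroup.mk_surjective
  have himg : Dense (((↑) : ℝ → AddCircle (1 : ℝ)) '' (G : Set ℝ)) :=
    hsurj.denseRange.dense_image hcont hdense
  refine himg.mono ?_
  rintro x ⟨y, hyG, rfl⟩
  induction hyG using AddSubgroup.closure_induction with
  | mem x hx =>
    rcases hx with rfl | rfl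
    · exact ⟨0, by simp [AddCircle.coe_period (1 : ℝ)]⟩
    · exact ⟨1, by simp⟩
  | zero => exact ⟨0, by simp⟩
  | add x y hx hy ihx ihy =>
    obtain ⟨zx, hzx⟩ := ihx
    obtain ⟨zy, hzy⟩ := ihy
    exact ⟨zx + zy, by simp only [add_zsmul, hzx, hzy]; rfl⟩
  | neg x hx ihx =>
    obtain ⟨zx, hzx⟩ := ihx
    exact ⟨-zx, by simp only [neg_zsmul, hzx]; rfl⟩

theorem closure_nsmul_univ' (c : AddCircle (1 : ℝ))
    (hd : Dense (Set.range fun z : ℤ => z • c)) :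
    ∀ x : AddCircle (1 : ℝ), x ∈ closure (Set.range fun n : ℕ => n • c) := by
  haveI : Fact ((0 : ℝ) < 1) := ⟨one_pos⟩
  set u : ℕ → AddCircle (1 : ℝ) := fun n => n • c with hu
  set Fu : Filter (AddCircle (1 : ℝ)) := Filter.map u Filter.atTop with hFu
  haveI : Fu.NeBot := Filter.map_neBot
  obtain ⟨x₀, hx₀⟩ := exists_clusterPt_of_compactSpace Fu
  -- shift up
  have hshift : ∀ y, ClusterPt y Fu → ClusterPt (y + c) Fu := by
    intro y hy
    have heq : ((· + c) ∘ u) = u ∘ (· + 1) := by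
      funext n
      simp [u, succ_nsmul]
    have h1 : Filter.Tendsto (· + c) Fu Fu := by
      rw [hFu, Filter.tendsto_map'_iff, heq]
      exact Filter.tendsto_map.comp (Filter.tendsto_add_atTop_nat 1)
    exact hy.map (continuous_add_right c).continuousAt h1
  -- shift down
  have hshift' : ∀ y, ClusterPt y Fu → ClusterPt (y - c) Fu := by
    intro y hy
    have h1 : Filter.Tendsto (· - c) Fu Fu := by
      rw [hFu, Filter.tendsto_map'_iff]
      have heq : ((· - c) ∘ u) =ᶠ[Filter.atTop] u ∘ (· - 1) := by
        filter_upwards [Filter.eventually_ge_atTop 1] with n hn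
        have : n = (n - 1) + 1 := by omega
        simp only [Function.comp_apply, u]
        rw [this, succ_nsmul]
        abel
      exact (Filter.tendsto_map.comp (Filter.tendsto_sub_atTop_nat 1)).congr' heq.symm
    exact hy.map (continuous_sub_right c).continuousAt h1
  have horbit : ∀ z : ℤ, ClusterPt (x₀ + z • c) Fu := by
    intro z
    induction z using Int.induction_on with
    | zero => simpa using hx₀
    | succ k ih =>
      have h := hshift _ ih
      have he : x₀ + ((k : ℤ) + 1) • c = x₀ + (k : ℤ) • c + c := by
        rw [add_zsmul, one_zsmul, add_assoc]
      rwa [he]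
    | pred k ih =>
      have h := hshift' _ ih
      have he : x₀ + (-(k : ℤ) - 1) • c = x₀ + (-(k : ℤ)) • c - c := by
        rw [sub_zsmul, one_zsmul]
        abel
      rwa [he]
  have hmemcl : ∀ y, ClusterPt y Fu → y ∈ closure (Set.range u) := by
    intro y hy
    rw [mem_closure_iff_clusterPt]
    exact hy.mono (by rw [hFu, Filter.le_principal_iff]; exact Filter.range_mem_map)
  -- the translated dense set
  intro x
  have hDsub : Set.range (fun z : ℤ => x₀ + z • c) ⊆ closure (Set.range u) := by
    rintro _ ⟨z, rfl⟩
    exact hmemcl _ (horbit z)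
  have hD : Dense (Set.range fun z : ℤ => x₀ + z • c) := by
    have : (Set.range fun z : ℤ => x₀ + z • c) = (x₀ + ·) '' Set.range (fun z : ℤ => z • c) := by
      ext w
      constructor
      · rintro ⟨z, rfl⟩; exact ⟨z • c, ⟨z, rfl⟩, rfl⟩
      · rintro ⟨v, ⟨z, rfl⟩, rfl⟩; exact ⟨z, rfl⟩
    rw [this]
    exact ((Homeomorph.addLeft x₀).surjective.denseRange).dense_image
      (Homeomorph.addLeft x₀).continuous hd
  have : Dense (closure (Set.range u)) := hD.mono hDsub
  have := this x
  rwa [closure_closure] at this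

theorem stmt_9 (a : ℕ → ℕ) (ha : ∀ k, 1 ≤ k → 1 ≤ a k)
    (q : ℕ → ℕ) (hq0 : q 0 = 1) (hq1 : q 1 = a 1)
    (hq : ∀ k, 1 ≤ k → q (k + 1) = a (k + 1) * q k + q (k - 1))
    (p : ℕ → ℕ) (hp0 : p 0 = 0) (hp1 : p 1 = 1)
    (hp : ∀ k, 1 ≤ k → p (k + 1) = a (k + 1) * p k + p (k - 1))
    (ρ : ℝ) (hρirr : Irrational ρ) (hρmem : ρ ∈ Set.Ioo (0 : ℝ) 1)
    (hρlim : Filter.Tendsto (fun k => (p k : ℝ) / (q k : ℝ)) Filter.atTop (nhds ρ))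
    (r : ℕ → ℕ) (hr1 : r 1 = q 1 - 1)
    (hr : ∀ k, 1 ≤ k → r (k + 1) = r k + a (k + 1))
    (S : ℕ → ℕ) (hSlow : ∀ j, j ≤ r 1 → S j = j + 1)
    (hShigh : ∀ k, 1 ≤ k → ∀ j, j < a (k + 1) → S (r k + j) = (j + 1) * q k)
    (Pi : {ω : ℕ → Bool //
        ∀ j, ∑ i ∈ Finset.range (j + 1), (ω i).toNat * S i < S (j + 1)} → AddCircle (1 : ℝ))
    (hPicont : Continuous Pi)
    (hPi : ∀ ω, Filter.Tendsto
        (fun N => ((↑(∑ j ∈ Finset.range (N + 1),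
            ((ω.val j).toNat : ℝ) * (S j : ℝ) * ρ)) : AddCircle (1 : ℝ)))
        Filter.atTop (nhds (Pi ω))) :
    Function.Surjective Pi := by
  haveI : Fact ((0 : ℝ) < 1) := ⟨one_pos⟩
  -- basic facts about q
  have hqpm : ∀ k, 1 ≤ q k ∧ q k ≤ q (k + 1) := by
    intro k
    induction k with
    | zero => exact ⟨by omega, by rw [hq0, hq1]; exact ha 1 le_rfl⟩
    | succ k ih =>
      refine ⟨le_trans ih.1 ih.2, ?_⟩
      rw [hq (k + 1) (by omega)]
      simp only [Nat.add_sub_cancel]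
      have h3 := ha (k + 2) (by omega)
      calc q (k + 1) ≤ a (k + 2) * q (k + 1) := Nat.le_mul_of_pos_left _ (by omega)
        _ ≤ a (k + 2) * q (k + 1) + q k := Nat.le_add_right _ _
  have hqk : ∀ k, 1 ≤ k → k ≤ q k := by
    intro k hk
    induction k, hk using Nat.le_induction with
    | base => rw [hq1]; exact ha 1 le_rfl
    | succ k hk ih =>
      rw [hq k hk]
      have h1 := (hqpm (k - 1)).1
      have h2 := ha (k + 1) (by omega)
      have h3 := (hqpm k).1
      nlinarith
  -- locating indices
  have locate : ∀ j, r 1 ≤ j → ∃ k, 1 ≤ k ∧ ∃ i, i < a (k + 1) ∧ j = r k + i := by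
    intro j hj
    induction j, hj using Nat.le_induction with
    | base =>
      refine ⟨1, le_rfl, 0, ?_, by omega⟩
      show 0 < a 2
      exact ha 2 (by omega)
    | succ j hj ih =>
      obtain ⟨k, hk, i, hi, rfl⟩ := ih
      by_cases h2 : i + 1 < a (k + 1)
      · exact ⟨k, hk, i + 1, h2, by omega⟩
      · refine ⟨k + 1, by omega, 0, ?_, ?_⟩
        · show 0 < a (k + 2)
          exact ha (k + 2) (by omega)
        · rw [hr k hk]; omega
  -- facts about S
  have hS0 : S 0 = 1 := by have := hSlow 0 (Nat.zero_le _); omega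
  have hstep : ∀ j, S j ≤ S (j + 1) ∧ S (j + 1) ≤ 2 * S j := by
    intro j
    by_cases hj : j + 1 ≤ r 1
    · rw [hSlow j (by omega), hSlow (j + 1) hj]; omega
    · obtain ⟨k, hk, i, hi, hji⟩ := locate j (by omega)
      subst hji
      have hSj : S (r k + i) = (i + 1) * q k := hShigh k hk i hi
      by_cases h2 : i + 1 < a (k + 1)
      · have hSj1 : S (r k + i + 1) = (i + 2) * q k := by
          have h := hShigh k hk (i + 1) h2
          have he : r k + (i + 1) = r k + i + 1 := by omega
          rw [he] at h
          rw [h]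
        rw [hSj, hSj1]
        have := (hqpm k).1
        constructor <;> nlinarith
      · have hieq : i + 1 = a (k + 1) := by omega
        have hidx : r k + i + 1 = r (k + 1) + 0 := by rw [hr k hk]; omega
        have hSj1 : S (r k + i + 1) = q (k + 1) := by
          rw [hidx, hShigh (k + 1) (by omega) 0 (show 0 < a (k + 2) from ha (k + 2) (by omega))]
          simp
        have hqrec : q (k + 1) = a (k + 1) * q k + q (k - 1) := hq k hk
        have hqm : q (k - 1) ≤ q k := by
          have h := (hqpm (k - 1)).2
          have he : k - 1 + 1 = k := by omega
          rwa [he] at h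
        rw [hSj, hSj1, hqrec, ← hieq]
        have h1 := (hqpm k).1
        have h0 : 1 ≤ q (k - 1) := (hqpm (k - 1)).1
        constructor <;> nlinarith
  have hmono : Monotone S := monotone_nat_of_le_succ fun j => (hstep j).1
  have hub : ∀ n, ∃ j, n < S j := by
    intro n
    refine ⟨r (n + 1), ?_⟩
    have h1 : S (r (n + 1) + 0) = (0 + 1) * q (n + 1) :=
      hShigh (n + 1) (by omega) 0 (show 0 < a (n + 2) from ha (n + 2) (by omega))
    simp only [Nat.add_zero, Nat.zero_add, one_mul] at h1
    rw [h1]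
    exact lt_of_lt_of_le (Nat.lt_succ_self n) (hqk (n + 1) (by omega))
  -- every nonnegative multiple of ρ is in the range of Pi
  have hrangePi : ∀ n : ℕ, (↑((n : ℝ) * ρ) : AddCircle (1 : ℝ)) ∈ Set.range Pi := by
    intro n
    obtain ⟨F, hFsum, hFcon⟩ := repr_exists' S hS0 hmono (fun j => (hstep j).2) hub n
    set ω : ℕ → Bool := fun i => decide (i ∈ F) with hω
    have hsum : ∀ j, ∑ i ∈ Finset.range (j + 1), (ω i).toNat * S i
        = ∑ i ∈ F ∩ Finset.range (j + 1), S i := by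
      intro j
      rw [Finset.inter_comm, ← Finset.filter_mem_eq_inter, Finset.sum_filter]
      apply Finset.sum_congr rfl
      intro i _
      by_cases hi : i ∈ F <;> simp [ω, hi]
    have hωmem : ∀ j, ∑ i ∈ Finset.range (j + 1), (ω i).toNat * S i < S (j + 1) :=
      fun j => (hsum j) ▸ hFcon j
    refine ⟨⟨ω, hωmem⟩, ?_⟩
    set B := F.sup id with hB
    have hconst : ∀ N, B ≤ N →
        ∑ j ∈ Finset.range (N + 1), ((ω j).toNat : ℝ) * (S j : ℝ) * ρ = (n : ℝ) * ρ := by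
      intro N hN
      have hsub : F ⊆ Finset.range (N + 1) := by
        intro i hi
        have : i ≤ B := Finset.le_sup (f := id) hi
        exact Finset.mem_range.mpr (by omega)
      have h1 : ∑ j ∈ Finset.range (N + 1), ((ω j).toNat : ℝ) * (S j : ℝ) * ρ
          = ∑ j ∈ (Finset.range (N + 1)).filter (· ∈ F), (S j : ℝ) * ρ := by
        rw [Finset.sum_filter]
        apply Finset.sum_congr rfl
        intro i _
        by_cases hi : i ∈ F <;> simp [ω, hi]
      rw [h1, Finset.filter_mem_eq_inter, Finset.inter_comm,
        Finset.inter_eq_left.mpr hsub, ← Finset.sum_mul, ← hFsum]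
      push_cast
      ring
    have hev : (fun _ : ℕ => ((↑((n : ℝ) * ρ)) : AddCircle (1 : ℝ))) =ᶠ[Filter.atTop]
        (fun N => ((↑(∑ j ∈ Finset.range (N + 1),
            ((ω j).toNat : ℝ) * (S j : ℝ) * ρ)) : AddCircle (1 : ℝ))) := by
      filter_upwards [Filter.eventually_ge_atTop B] with N hN
      rw [hconst N hN]
    have h2 := Filter.Tendsto.congr' hev tendsto_const_nhds
    exact tendsto_nhds_unique (hPi ⟨ω, hωmem⟩) h2
  -- the range of Pi is closed
  have hcl : IsClosed {ω : ℕ → Bool |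
      ∀ j, ∑ i ∈ Finset.range (j + 1), (ω i).toNat * S i < S (j + 1)} := by
    rw [Set.setOf_forall]
    apply isClosed_iInter
    intro j
    have hcont : Continuous fun ω : ℕ → Bool =>
        ∑ i ∈ Finset.range (j + 1), (ω i).toNat * S i := by
      apply continuous_finset_sum
      intro i _
      exact (continuous_of_discreteTopology (f := fun b : Bool => b.toNat * S i)).comp
        (continuous_apply i)
    exact (isClosed_discrete {m : ℕ | m < S (j + 1)}).preimage hcont
  haveI : CompactSpace {ω : ℕ → Bool //
      ∀ j, ∑ i ∈ Finset.range (j + 1), (ω i).toNat * S i < S (j + 1)} :=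
    isCompact_iff_compactSpace.mp hcl.isCompact
  have hclosed : IsClosed (Set.range Pi) := (isCompact_range hPicont).isClosed
  -- conclude
  intro x
  have hx := closure_nsmul_univ' (ρ : AddCircle (1 : ℝ)) (dense_zmul' ρ hρirr) x
  have hsub : Set.range (fun n : ℕ => n • ((ρ : AddCircle (1 : ℝ)))) ⊆ Set.range Pi := by
    rintro _ ⟨n, rfl⟩
    have he : (n : ℕ) • ((ρ : AddCircle (1 : ℝ))) = (↑((n : ℝ) * ρ) : AddCircle (1 : ℝ)) := by
      rw [← AddCircle.coe_nsmul, nsmul_eq_mul]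
    show (n : ℕ) • ((ρ : AddCircle (1 : ℝ))) ∈ Set.range Pi
    rw [he]
    exact hrangePi n
  exact hclosed.closure_subset_iff.mpr hsub hx
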